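/- Let σ > 0, r ≥ 0, let f be the Ricean fading kernel, and let mmse be the canonical MMSE of an arbitrary discrete input with finite support. Then lim_{snr → +∞} snr² · ∫₀^∞ f(t)·mmse(snr·t) dt = e^{−r²/(2σ²)}·M[mmse; 2]/(2σ²). (First-order high-snr coefficient of the average MMSE in a Rayleigh or Ricean fading coherent channel; in particular the average MMSE decays as snr^{−2}.) -/

import Mathlib

open MeasureTheory Filter Asymptotics Topology

/-- Gaussian weight `exp(-|y - √s·x|²)`. -/
noncomputable def gaussWeight (s : ℝ) (x y : ℂ) : ℝ :=
  Real.exp (-(‖y - (Real.sqrt s : ℂ) * x‖) ^ 2)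

/-- Conditional-mean estimator `X̂_s(y)` for a discrete input with points `x` and weights `p`. -/
noncomputable def condMean {K : ℕ} (x : Fin K → ℂ) (p : Fin K → ℝ) (s : ℝ) (y : ℂ) : ℂ :=
  (∑ j, (p j : ℂ) * x j * (gaussWeight s (x j) y : ℂ)) /
    (∑ j, (p j : ℂ) * (gaussWeight s (x j) y : ℂ))

/-- Canonical MMSE of a discrete input with finite support in the AWGN channel. -/
noncomputable def discreteMMSE {K : ℕ} (x : Fin K → ℂ) (p : Fin K → ℝ) (s : ℝ) : ℝ :=
  ∑ i, p i * ∫ y : ℂ,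
    (‖x i - condMean x p s y‖) ^ 2 * Real.pi⁻¹ * gaussWeight s (x i) y

/-- Real Mellin transform `M[f; z] = ∫₀^∞ t^{z-1} f(t) dt`. -/
noncomputable def mellinR (f : ℝ → ℝ) (z : ℝ) : ℝ :=
  ∫ t in Set.Ioi (0 : ℝ), t ^ (z - 1) * f t

/-- Modified Bessel function of the first kind of order zero. -/
noncomputable def besselI0 (x : ℝ) : ℝ :=
  ∑' n : ℕ, (x / 2) ^ (2 * n) / ((n.factorial : ℝ)) ^ 2

/-- Ricean fading kernel `f(t) = (t/(2σ²)) e^{-(t+r²)/(2σ²)} I₀(r√t/σ²)` (`r = 0`: Rayleigh). -/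
noncomputable def riceKernel (σ r t : ℝ) : ℝ :=
  t / (2 * σ ^ 2) * Real.exp (-((t + r ^ 2) / (2 * σ ^ 2))) *
    besselI0 (r * Real.sqrt t / σ ^ 2)



lemma besselI0_term_eq (x : ℝ) (n : ℕ) :
    (x / 2) ^ (2 * n) / ((n.factorial : ℝ)) ^ 2 = (x ^ 2 / 4) ^ n / ((n.factorial : ℝ)) ^ 2 := by
  rw [pow_mul]; ring_nf

lemma besselI0_term_nonneg (x : ℝ) (n : ℕ) :
    0 ≤ (x / 2) ^ (2 * n) / ((n.factorial : ℝ)) ^ 2 := by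
  rw [besselI0_term_eq]; positivity

lemma besselI0_term_le (x : ℝ) (n : ℕ) :
    (x / 2) ^ (2 * n) / ((n.factorial : ℝ)) ^ 2 ≤ (x ^ 2 / 4) ^ n / (n.factorial : ℝ) := by
  rw [besselI0_term_eq]
  apply div_le_div_of_nonneg_left (by positivity) (by positivity)
  calc (n.factorial : ℝ) = n.factorial * 1 := by ring
  _ ≤ (n.factorial : ℝ) * n.factorial := by
      have h1 : (1:ℝ) ≤ n.factorial := by exact_mod_cast n.factorial_pos
      nlinarith
  _ = (n.factorial : ℝ) ^ 2 := by ring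

lemma besselI0_summable (x : ℝ) :
    Summable (fun n : ℕ => (x / 2) ^ (2 * n) / ((n.factorial : ℝ)) ^ 2) :=
  Summable.of_nonneg_of_le (besselI0_term_nonneg x) (besselI0_term_le x)
    (Real.summable_pow_div_factorial (x ^ 2 / 4))

lemma one_le_besselI0 (x : ℝ) : 1 ≤ besselI0 x := by
  have h := Summable.le_tsum (besselI0_summable x) 0 (fun n _ => besselI0_term_nonneg x n)
  simpa [besselI0] using h

lemma besselI0_le (x : ℝ) : besselI0 x ≤ Real.exp (x ^ 2 / 4) := by
  have h1 : Real.exp (x ^ 2 / 4) = ∑' n : ℕ, (x ^ 2 / 4) ^ n / (n.factorial : ℝ) := by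
    rw [Real.exp_eq_exp_ℝ, NormedSpace.exp_eq_tsum_div]
  rw [h1]
  exact Summable.tsum_le_tsum (besselI0_term_le x) (besselI0_summable x)
    (Real.summable_pow_div_factorial (x ^ 2 / 4))

lemma besselI0_measurable : Measurable besselI0 := by
  have : ∀ N : ℕ, Measurable (fun x : ℝ => ∑ n ∈ Finset.range N,
      (x / 2) ^ (2 * n) / ((n.factorial : ℝ)) ^ 2) := by
    intro N
    apply Finset.measurable_sum
    intro n _
    exact ((measurable_id.div_const 2).pow_const _).div_const _
  exact measurable_of_tendsto_metrizable' atTop this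
    (tendsto_pi_nhds.mpr fun x => ((besselI0_summable x).hasSum.tendsto_sum_nat))

lemma besselI0_nonneg (x : ℝ) : 0 ≤ besselI0 x := le_trans one_pos.le (one_le_besselI0 x)



lemma gauss_base_integrable : Integrable (fun y : ℂ => Real.exp (-(‖y‖) ^ 2)) := by
  have h : Integrable (fun v : ℂ => Complex.exp (-1 * ‖v‖ ^ 2 + 2 * (inner ℝ 0 v : ℝ))) :=
    GaussianFourier.integrable_cexp_neg_mul_sq_norm_add (by norm_num) 2 0
  have h2 := h.norm
  refine h2.congr (Filter.Eventually.of_forall fun y => ?_)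
  simp [Complex.norm_exp]
  norm_cast

lemma gauss_integrable (c : ℂ) :
    Integrable (fun y : ℂ => Real.exp (-(‖y - c‖) ^ 2)) :=
  gauss_base_integrable.comp_sub_right c

lemma gauss_integral (c : ℂ) :
    ∫ y : ℂ, Real.pi⁻¹ * Real.exp (-(‖y - c‖) ^ 2) = 1 := by
  rw [MeasureTheory.integral_const_mul]
  rw [integral_sub_right_eq_self (fun y : ℂ => Real.exp (-(‖y‖) ^ 2)) c]
  have h : ∫ y : ℂ, Real.exp (-(‖y‖) ^ 2)
      = (Real.pi / 1) ^ ((Module.finrank ℝ ℂ : ℝ) / 2) := by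
    rw [← GaussianFourier.integral_rexp_neg_mul_sq_norm one_pos]
    congr 1 with y
    ring_nf
  rw [h, Complex.finrank_real_complex]
  norm_num

lemma gauss_midpoint (y a b : ℂ) :
    Real.exp (-(‖y - a‖) ^ 2 / 2) * Real.exp (-(‖y - b‖) ^ 2 / 2)
      = Real.exp (-(‖a - b‖) ^ 2 / 4) *
        Real.exp (-(‖y - (a + b) / 2‖) ^ 2) := by
  rw [← Real.exp_add, ← Real.exp_add]
  congr 1
  have hu : y - (a + b) / 2 = ((y - a) + (y - b)) / 2 := by ring
  have hab : a - b = (y - b) - (y - a) := by ring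
  set u := y - a with hu'
  set v := y - b with hv'
  have hpar := parallelogram_law_with_norm ℝ u v
  have h2 : ‖y - (a + b) / 2‖ = ‖u + v‖ / 2 := by
    rw [hu, norm_div, Complex.norm_two]
  rw [hab, h2]
  have e1 : ‖u‖ = ‖u‖ := rfl
  have e2 : ‖v‖ = ‖v‖ := rfl
  have e3 : ‖v - u‖ = ‖u - v‖ := norm_sub_rev v u
  have e4 : ‖u + v‖ = ‖u + v‖ := rfl
  rw [e1, e2, e3, e4]
  nlinarith [hpar]




section MMSE

variable {K : ℕ} (x : Fin K → ℂ) (p : Fin K → ℝ)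

lemma gaussWeight_pos (s : ℝ) (c y : ℂ) : 0 < gaussWeight s c y := Real.exp_pos _

lemma denom_pos (hp : ∀ j, 0 < p j) (hK : 0 < K) (s : ℝ) (y : ℂ) :
    0 < ∑ j, p j * gaussWeight s (x j) y := by
  have : Nonempty (Fin K) := ⟨⟨0, hK⟩⟩
  exact Finset.sum_pos (fun j _ => mul_pos (hp j) (gaussWeight_pos s (x j) y))
    Finset.univ_nonempty

lemma cdenom_eq (s : ℝ) (y : ℂ) :
    (∑ j, (p j : ℂ) * (gaussWeight s (x j) y : ℂ))
      = ((∑ j, p j * gaussWeight s (x j) y : ℝ) : ℂ) := by push_cast; rfl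

lemma sub_condMean_eq (hp : ∀ j, 0 < p j) (hK : 0 < K) (s : ℝ) (i : Fin K) (y : ℂ) :
    x i - condMean x p s y =
      (∑ j, (p j : ℂ) * (gaussWeight s (x j) y : ℂ) * (x i - x j)) /
        ((∑ j, p j * gaussWeight s (x j) y : ℝ) : ℂ) := by
  have hD : (0:ℝ) < ∑ j, p j * gaussWeight s (x j) y := denom_pos x p hp hK s y
  have hD' : ((∑ j, p j * gaussWeight s (x j) y : ℝ) : ℂ) ≠ 0 :=
    Complex.ofReal_ne_zero.mpr hD.ne'
  rw [condMean, cdenom_eq, eq_div_iff hD', sub_mul, div_mul_cancel₀ _ hD']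
  rw [← cdenom_eq, Finset.mul_sum, ← Finset.sum_sub_distrib]
  apply Finset.sum_congr rfl
  intro j _
  ring

lemma abs_sub_condMean_le (hp : ∀ j, 0 < p j) (hK : 0 < K) {B : ℝ}
    (hB : ∀ j, ‖x j‖ ≤ B) (s : ℝ) (i : Fin K) (y : ℂ) :
    ‖x i - condMean x p s y‖ ≤
      (2 * B) * ((∑ j ∈ Finset.univ.erase i, p j * gaussWeight s (x j) y) /
        (∑ j, p j * gaussWeight s (x j) y)) := by
  have hD : (0:ℝ) < ∑ j, p j * gaussWeight s (x j) y := denom_pos x p hp hK s y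
  rw [sub_condMean_eq x p hp hK s i y, norm_div]
  rw [Complex.norm_real, Real.norm_eq_abs, abs_of_pos hD]
  rw [div_le_iff₀ hD, mul_assoc, div_mul_cancel₀ _ hD.ne']
  calc ‖∑ j, (p j : ℂ) * (gaussWeight s (x j) y : ℂ) * (x i - x j)‖
      ≤ ∑ j, ‖(p j : ℂ) * (gaussWeight s (x j) y : ℂ) * (x i - x j)‖ :=
        norm_sum_le _ _
    _ = ∑ j, p j * gaussWeight s (x j) y * ‖x i - x j‖ := by
        apply Finset.sum_congr rfl; intro j _
        rw [norm_mul, norm_mul, Complex.norm_real, Complex.norm_real, Real.norm_eq_abs, Real.norm_eq_abs,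
          abs_of_pos (hp j), abs_of_pos (gaussWeight_pos s (x j) y)]
    _ = ∑ j ∈ Finset.univ.erase i, p j * gaussWeight s (x j) y * ‖x i - x j‖ := by
        rw [← Finset.sum_erase_add _ _ (Finset.mem_univ i)]
        simp
    _ ≤ ∑ j ∈ Finset.univ.erase i, p j * gaussWeight s (x j) y * (2 * B) := by
        apply Finset.sum_le_sum
        intro j _
        apply mul_le_mul_of_nonneg_left _ (le_of_lt (mul_pos (hp j) (gaussWeight_pos s (x j) y)))
        calc ‖x i - x j‖ ≤ ‖x i‖ + ‖x j‖ :=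
              by simpa [sub_eq_add_neg] using norm_add_le (x i) (-x j)
          _ ≤ B + B := add_le_add (hB i) (hB j)
          _ = 2 * B := by ring
    _ = 2 * B * ∑ j ∈ Finset.univ.erase i, p j * gaussWeight s (x j) y := by
        rw [← Finset.sum_mul, mul_comm]

lemma term_bound (hp : ∀ j, 0 < p j) (hK : 0 < K) (s : ℝ) (i j : Fin K) (y : ℂ) :
    p j * gaussWeight s (x j) y / (∑ k, p k * gaussWeight s (x k) y) * gaussWeight s (x i) y
      ≤ Real.sqrt (p j / p i) *
        (Real.exp (-(‖(Real.sqrt s : ℂ) * x i - (Real.sqrt s : ℂ) * x j‖) ^ 2 / 4) *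
         Real.exp (-(‖y - ((Real.sqrt s : ℂ) * x i + (Real.sqrt s : ℂ) * x j) / 2‖) ^ 2)) := by
  have hD : (0:ℝ) < ∑ k, p k * gaussWeight s (x k) y := denom_pos x p hp hK s y
  set Wi := gaussWeight s (x i) y with hWi
  set Wj := gaussWeight s (x j) y with hWj
  set D := ∑ k, p k * gaussWeight s (x k) y with hD'
  have hWi0 : 0 < Wi := gaussWeight_pos s (x i) y
  have hWj0 : 0 < Wj := gaussWeight_pos s (x j) y
  set m := p j * Wj / D * Wi with hm
  have hm0 : 0 ≤ m :=
    mul_nonneg (div_nonneg (mul_nonneg (hp j).le hWj0.le) hD.le) hWi0.le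
  have hle1 : p i * Wi ≤ D := by
    rw [hD']
    exact Finset.single_le_sum (f := fun k => p k * gaussWeight s (x k) y)
      (fun k _ => le_of_lt (mul_pos (hp k) (gaussWeight_pos s (x k) y))) (Finset.mem_univ i)
  have hle2 : p j * Wj ≤ D := by
    rw [hD']
    exact Finset.single_le_sum (f := fun k => p k * gaussWeight s (x k) y)
      (fun k _ => le_of_lt (mul_pos (hp k) (gaussWeight_pos s (x k) y))) (Finset.mem_univ j)
  have hma : m ≤ p j * Wj / p i := by
    rw [hm, div_mul_eq_mul_div, div_le_div_iff₀ hD (hp i)]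
    calc p j * Wj * Wi * p i = (p i * Wi) * (p j * Wj) := by ring
      _ ≤ D * (p j * Wj) := by
          exact mul_le_mul_of_nonneg_right hle1 (mul_nonneg (hp j).le hWj0.le)
      _ = p j * Wj * D := by ring
  have hmb : m ≤ Wi := by
    rw [hm]
    apply mul_le_of_le_one_left hWi0.le
    rw [div_le_one hD]
    exact hle2
  have hsq : m ^ 2 ≤ (p j * Wj / p i) * Wi := by nlinarith
  have hkey : m ≤ Real.sqrt ((p j * Wj / p i) * Wi) := by
    rw [← Real.sqrt_sq hm0]
    exact Real.sqrt_le_sqrt hsq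
  have heq : (p j * Wj / p i) * Wi = (p j / p i) * (Wj * Wi) := by ring
  have hfinal : Real.sqrt ((p j * Wj / p i) * Wi)
      = Real.sqrt (p j / p i) * (Real.sqrt Wj * Real.sqrt Wi) := by
    rw [heq, Real.sqrt_mul (div_nonneg (hp j).le (hp i).le), Real.sqrt_mul hWj0.le]
  have hsqrtWi : Real.sqrt Wi
      = Real.exp (-(‖y - (Real.sqrt s : ℂ) * x i‖) ^ 2 / 2) := by
    rw [hWi, gaussWeight, ← Real.exp_half]
  have hsqrtWj : Real.sqrt Wj
      = Real.exp (-(‖y - (Real.sqrt s : ℂ) * x j‖) ^ 2 / 2) := by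
    rw [hWj, gaussWeight, ← Real.exp_half]
  calc m ≤ Real.sqrt ((p j * Wj / p i) * Wi) := hkey
    _ = Real.sqrt (p j / p i) * (Real.sqrt Wi * Real.sqrt Wj) := by rw [hfinal]; ring
    _ = Real.sqrt (p j / p i) *
        (Real.exp (-(‖(Real.sqrt s : ℂ) * x i - (Real.sqrt s : ℂ) * x j‖) ^ 2 / 4) *
         Real.exp (-(‖y - ((Real.sqrt s : ℂ) * x i + (Real.sqrt s : ℂ) * x j) / 2‖) ^ 2)) := by
        rw [hsqrtWi, hsqrtWj, gauss_midpoint y ((Real.sqrt s : ℂ) * x i) ((Real.sqrt s : ℂ) * x j)]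

lemma integrand_le (hp : ∀ j, 0 < p j) (hK : 0 < K) {B : ℝ}
    (hB : ∀ j, ‖x j‖ ≤ B) (s : ℝ) (i : Fin K) (y : ℂ) :
    (‖x i - condMean x p s y‖) ^ 2 * Real.pi⁻¹ * gaussWeight s (x i) y ≤
      ∑ j ∈ Finset.univ.erase i,
        (4 * B ^ 2 * Real.sqrt (p j / p i) *
          Real.exp (-(‖(Real.sqrt s : ℂ) * x i - (Real.sqrt s : ℂ) * x j‖) ^ 2 / 4)) *
        (Real.pi⁻¹ * Real.exp (-(‖y - ((Real.sqrt s : ℂ) * x i + (Real.sqrt s : ℂ) * x j) / 2‖) ^ 2)) := by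
  have hD : (0:ℝ) < ∑ k, p k * gaussWeight s (x k) y := denom_pos x p hp hK s y
  set A := ‖x i - condMean x p s y‖ with hA
  set S := ∑ j ∈ Finset.univ.erase i, p j * gaussWeight s (x j) y with hS
  set D := ∑ k, p k * gaussWeight s (x k) y with hD'
  have hA0 : 0 ≤ A := norm_nonneg _
  have hB0 : 0 ≤ B := le_trans (norm_nonneg (x i)) (hB i)
  have hS0 : 0 ≤ S := Finset.sum_nonneg fun j _ =>
    le_of_lt (mul_pos (hp j) (gaussWeight_pos s (x j) y))
  have hSD : S ≤ D := by
    rw [hS, hD']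
    exact Finset.sum_le_sum_of_subset_of_nonneg (Finset.erase_subset _ _)
      (fun j _ _ => le_of_lt (mul_pos (hp j) (gaussWeight_pos s (x j) y)))
  have hr1 : S / D ≤ 1 := (div_le_one hD).mpr hSD
  have hr0 : 0 ≤ S / D := div_nonneg hS0 hD.le
  have habs : A ≤ 2 * B * (S / D) := abs_sub_condMean_le x p hp hK hB s i y
  have hq : A ^ 2 ≤ 4 * B ^ 2 * (S / D) := by
    have hr2 : S / D * (S / D) ≤ S / D := by nlinarith
    calc A ^ 2 ≤ (2 * B * (S / D)) ^ 2 := pow_le_pow_left₀ hA0 habs 2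
      _ = 4 * B ^ 2 * (S / D * (S / D)) := by ring
      _ ≤ 4 * B ^ 2 * (S / D) :=
          mul_le_mul_of_nonneg_left hr2 (by positivity)
  have hWi0 : 0 < gaussWeight s (x i) y := gaussWeight_pos s (x i) y
  have hπ : (0:ℝ) ≤ Real.pi⁻¹ := inv_nonneg.mpr Real.pi_pos.le
  calc A ^ 2 * Real.pi⁻¹ * gaussWeight s (x i) y
      = A ^ 2 * (Real.pi⁻¹ * gaussWeight s (x i) y) := by ring
    _ ≤ (4 * B ^ 2 * (S / D)) * (Real.pi⁻¹ * gaussWeight s (x i) y) :=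
        mul_le_mul_of_nonneg_right hq (mul_nonneg hπ hWi0.le)
    _ = 4 * B ^ 2 * Real.pi⁻¹ * ∑ j ∈ Finset.univ.erase i,
        (p j * gaussWeight s (x j) y / D * gaussWeight s (x i) y) := by
        rw [← Finset.sum_mul, ← Finset.sum_div, ← hS]; ring
    _ ≤ 4 * B ^ 2 * Real.pi⁻¹ * ∑ j ∈ Finset.univ.erase i,
        (Real.sqrt (p j / p i) *
          (Real.exp (-(‖(Real.sqrt s : ℂ) * x i - (Real.sqrt s : ℂ) * x j‖) ^ 2 / 4) *
           Real.exp (-(‖y - ((Real.sqrt s : ℂ) * x i + (Real.sqrt s : ℂ) * x j) / 2‖) ^ 2))) := by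
        apply mul_le_mul_of_nonneg_left _ (by positivity)
        exact Finset.sum_le_sum fun j _ => term_bound x p hp hK s i j y
    _ = _ := by
        rw [Finset.mul_sum]
        exact Finset.sum_congr rfl fun j _ => by ring

lemma integral_le (hp : ∀ j, 0 < p j) (hK : 0 < K) {B : ℝ}
    (hB : ∀ j, ‖x j‖ ≤ B) (s : ℝ) (i : Fin K) :
    (∫ y : ℂ, (‖x i - condMean x p s y‖) ^ 2 * Real.pi⁻¹ * gaussWeight s (x i) y) ≤
      ∑ j ∈ Finset.univ.erase i, 4 * B ^ 2 * Real.sqrt (p j / p i) *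
          Real.exp (-(‖(Real.sqrt s : ℂ) * x i - (Real.sqrt s : ℂ) * x j‖) ^ 2 / 4) := by
  set c : Fin K → ℝ := fun j => 4 * B ^ 2 * Real.sqrt (p j / p i) *
      Real.exp (-(‖(Real.sqrt s : ℂ) * x i - (Real.sqrt s : ℂ) * x j‖) ^ 2 / 4) with hc
  set m : Fin K → ℂ := fun j => ((Real.sqrt s : ℂ) * x i + (Real.sqrt s : ℂ) * x j) / 2 with hm
  have hgint : ∀ j, Integrable (fun y : ℂ =>
      c j * (Real.pi⁻¹ * Real.exp (-(‖y - m j‖) ^ 2))) := fun j =>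
    ((gauss_integrable (m j)).const_mul Real.pi⁻¹).const_mul (c j)
  have hgint' : Integrable (fun y : ℂ => ∑ j ∈ Finset.univ.erase i,
      c j * (Real.pi⁻¹ * Real.exp (-(‖y - m j‖) ^ 2))) :=
    integrable_finset_sum _ fun j _ => hgint j
  calc (∫ y : ℂ, (‖x i - condMean x p s y‖) ^ 2 * Real.pi⁻¹ * gaussWeight s (x i) y)
      ≤ ∫ y : ℂ, ∑ j ∈ Finset.univ.erase i,
          c j * (Real.pi⁻¹ * Real.exp (-(‖y - m j‖) ^ 2)) := by
        apply integral_mono_of_nonneg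
        · exact Filter.Eventually.of_forall fun y =>
            mul_nonneg (mul_nonneg (by positivity) (inv_nonneg.mpr Real.pi_pos.le))
              (gaussWeight_pos s (x i) y).le
        · exact hgint'
        · exact Filter.Eventually.of_forall fun y => integrand_le x p hp hK hB s i y
    _ = ∑ j ∈ Finset.univ.erase i, c j := by
        rw [integral_finset_sum _ fun j _ => hgint j]
        apply Finset.sum_congr rfl
        intro j _
        rw [MeasureTheory.integral_const_mul, gauss_integral (m j), mul_one]

lemma mmse_nonneg (hp : ∀ j, 0 < p j) (s : ℝ) : 0 ≤ discreteMMSE x p s :=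
  Finset.sum_nonneg fun i _ => mul_nonneg (hp i).le (integral_nonneg fun y =>
    mul_nonneg (mul_nonneg (pow_nonneg (norm_nonneg _) 2)
      (inv_nonneg.mpr Real.pi_pos.le)) (gaussWeight_pos _ _ _).le)

set_option maxHeartbeats 1000000 in
lemma mmse_exp_bound (hx : Function.Injective x) (hp : ∀ j, 0 < p j) (hK : 0 < K) :
    ∃ C δ : ℝ, 0 ≤ C ∧ 0 < δ ∧ ∀ s, 0 ≤ s →
      discreteMMSE x p s ≤ C * Real.exp (-(δ * s)) := by
  have hne : Nonempty (Fin K) := ⟨⟨0, hK⟩⟩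
  have hune : (Finset.univ : Finset (Fin K)).Nonempty := Finset.univ_nonempty
  set B := Finset.univ.sup' hune (fun j => ‖x j‖) with hBdef
  have hB : ∀ j, ‖x j‖ ≤ B := fun j => Finset.le_sup' (fun j => ‖x j‖) (Finset.mem_univ j)
  obtain ⟨δ, hδpos, hδle⟩ : ∃ δ : ℝ, 0 < δ ∧ ∀ i j : Fin K, i ≠ j →
      δ ≤ (‖x i - x j‖) ^ 2 / 4 := by
    by_cases h2 : ((Finset.univ : Finset (Fin K)).offDiag).Nonempty
    · refine ⟨((Finset.univ.offDiag).image
          (fun q => (‖x q.1 - x q.2‖) ^ 2 / 4)).min' (h2.image _), ?_, ?_⟩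
      · rw [Finset.lt_min'_iff]
        intro b hb
        obtain ⟨q, hq, rfl⟩ := Finset.mem_image.mp hb
        have hqq : q.1 ≠ q.2 := (Finset.mem_offDiag.mp hq).2.2
        have : x q.1 - x q.2 ≠ 0 := sub_ne_zero.mpr fun h => hqq (hx h)
        have h0 : 0 < ‖x q.1 - x q.2‖ := norm_pos_iff.mpr this
        positivity
      · intro i j hij
        have hmem : (i, j) ∈ (Finset.univ : Finset (Fin K)).offDiag :=
          Finset.mem_offDiag.mpr ⟨Finset.mem_univ _, Finset.mem_univ _, hij⟩
        exact Finset.min'_le _ _ (Finset.mem_image_of_mem _ hmem)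
    · refine ⟨1, one_pos, fun i j hij => absurd ?_ h2⟩
      exact ⟨(i, j), Finset.mem_offDiag.mpr ⟨Finset.mem_univ _, Finset.mem_univ _, hij⟩⟩
  set C := ∑ i, p i * ∑ j ∈ Finset.univ.erase i, 4 * B ^ 2 * Real.sqrt (p j / p i) with hCdef
  have hC0 : 0 ≤ C := Finset.sum_nonneg fun i _ => mul_nonneg (hp i).le
    (Finset.sum_nonneg fun j _ => by positivity)
  refine ⟨C, δ, hC0, hδpos, fun s hs => ?_⟩
  have habs2 : ∀ i j : Fin K,
      (‖(Real.sqrt s : ℂ) * x i - (Real.sqrt s : ℂ) * x j‖) ^ 2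
        = s * (‖x i - x j‖) ^ 2 := by
    intro i j
    rw [show (Real.sqrt s : ℂ) * x i - (Real.sqrt s : ℂ) * x j
        = (Real.sqrt s : ℂ) * (x i - x j) by ring, norm_mul, Complex.norm_real, Real.norm_eq_abs,
      abs_of_nonneg (Real.sqrt_nonneg s), mul_pow, Real.sq_sqrt hs]
  have hexp : ∀ i j : Fin K, j ≠ i →
      Real.exp (-(‖(Real.sqrt s : ℂ) * x i - (Real.sqrt s : ℂ) * x j‖) ^ 2 / 4)
        ≤ Real.exp (-(δ * s)) := by
    intro i j hji
    rw [habs2]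
    apply Real.exp_le_exp.mpr
    have h1 : δ ≤ (‖x i - x j‖) ^ 2 / 4 := hδle i j (Ne.symm hji)
    have h2 : δ * s ≤ (‖x i - x j‖) ^ 2 / 4 * s :=
      mul_le_mul_of_nonneg_right h1 hs
    linarith
  calc discreteMMSE x p s
      ≤ ∑ i, p i * ∑ j ∈ Finset.univ.erase i, 4 * B ^ 2 * Real.sqrt (p j / p i) *
          Real.exp (-(‖(Real.sqrt s : ℂ) * x i - (Real.sqrt s : ℂ) * x j‖) ^ 2 / 4) :=
        Finset.sum_le_sum fun i _ => mul_le_mul_of_nonneg_left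
          (integral_le x p hp hK hB s i) (hp i).le
    _ ≤ ∑ i, p i * ∑ j ∈ Finset.univ.erase i,
          4 * B ^ 2 * Real.sqrt (p j / p i) * Real.exp (-(δ * s)) := by
        apply Finset.sum_le_sum
        intro i _
        apply mul_le_mul_of_nonneg_left _ (hp i).le
        apply Finset.sum_le_sum
        intro j hj
        exact mul_le_mul_of_nonneg_left (hexp i j (Finset.mem_erase.mp hj).1) (by positivity)
    _ = C * Real.exp (-(δ * s)) := by
        rw [hCdef, Finset.sum_mul]
        apply Finset.sum_congr rfl
        intro i _
        rw [mul_assoc, ← Finset.sum_mul]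

lemma gaussWeight_continuous (c : ℂ) : Continuous fun q : ℝ × ℂ => gaussWeight q.1 c q.2 := by
  unfold gaussWeight
  apply Real.continuous_exp.comp
  apply Continuous.neg
  apply Continuous.pow
  exact continuous_norm.comp (continuous_snd.sub
    ((Complex.continuous_ofReal.comp (Real.continuous_sqrt.comp continuous_fst)).mul
      continuous_const))

lemma condMean_continuous (hp : ∀ j, 0 < p j) (hK : 0 < K) :
    Continuous fun q : ℝ × ℂ => condMean x p q.1 q.2 := by
  unfold condMean
  apply Continuous.div
  · exact continuous_finset_sum _ fun j _ => continuous_const.mul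
      (Complex.continuous_ofReal.comp (gaussWeight_continuous (x j)))
  · exact continuous_finset_sum _ fun j _ => continuous_const.mul
      (Complex.continuous_ofReal.comp (gaussWeight_continuous (x j)))
  · intro q
    rw [cdenom_eq]
    exact Complex.ofReal_ne_zero.mpr (denom_pos x p hp hK q.1 q.2).ne'

lemma mmse_measurable (hp : ∀ j, 0 < p j) (hK : 0 < K) :
    Measurable (discreteMMSE x p) := by
  have hint : ∀ i : Fin K, StronglyMeasurable fun s : ℝ => ∫ y : ℂ,
      (‖x i - condMean x p s y‖) ^ 2 * Real.pi⁻¹ * gaussWeight s (x i) y := by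
    intro i
    have hcont : Continuous fun q : ℝ × ℂ =>
        (‖x i - condMean x p q.1 q.2‖) ^ 2 * Real.pi⁻¹ *
          gaussWeight q.1 (x i) q.2 := by
      apply Continuous.mul
      · apply Continuous.mul
        · exact (continuous_norm.comp
            (continuous_const.sub (condMean_continuous x p hp hK))).pow 2
        · exact continuous_const
      · exact gaussWeight_continuous (x i)
    exact hcont.stronglyMeasurable.integral_prod_right'
  unfold discreteMMSE
  exact Finset.measurable_sum _ fun i _ => measurable_const.mul (hint i).measurable

end MMSE



lemma riceKernel_nonneg (σ r : ℝ) {t : ℝ} (ht : 0 ≤ t) : 0 ≤ riceKernel σ r t := by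
  unfold riceKernel
  apply mul_nonneg (mul_nonneg (div_nonneg ht (by positivity)) (Real.exp_pos _).le)
  exact besselI0_nonneg _

lemma riceKernel_measurable (σ r : ℝ) : Measurable (riceKernel σ r) := by
  unfold riceKernel
  apply Measurable.mul
  · apply Measurable.mul
    · exact measurable_id.div_const _
    · exact Real.measurable_exp.comp ((measurable_id.add_const _).div_const _).neg
  · exact besselI0_measurable.comp
      ((Real.continuous_sqrt.measurable.const_mul r).div_const _)

lemma rice_term_bound (σ r δ C : ℝ) (hσ : 0 < σ) (hr : 0 ≤ r) (hδ : 0 < δ) (hC : 0 ≤ C)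
    (g : ℝ → ℝ) (hg0 : ∀ u, 0 ≤ g u) (hgb : ∀ u, 0 ≤ u → g u ≤ C * Real.exp (-(δ * u)))
    {snr u : ℝ} (hsnr : max 1 (r ^ 2 / (2 * δ * σ ^ 2 * σ ^ 2)) ≤ snr) (hu : 0 < u) :
    ‖snr * (riceKernel σ r (u / snr) * g u)‖ ≤
      C / (2 * σ ^ 2) * (4 / δ) * Real.exp (-(δ / 4) * u) := by
  have hsnr1 : (1:ℝ) ≤ snr := le_trans (le_max_left _ _) hsnr
  have hsnr0 : (0:ℝ) < snr := lt_of_lt_of_le one_pos hsnr1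
  set v := u / snr with hv
  have hv0 : 0 ≤ v := div_nonneg hu.le hsnr0.le
  have hvs : snr * v = u := by rw [hv, mul_comm, div_mul_cancel₀ u hsnr0.ne']
  have hFnn : 0 ≤ snr * (riceKernel σ r v * g u) :=
    mul_nonneg hsnr0.le (mul_nonneg (riceKernel_nonneg σ r hv0) (hg0 u))
  rw [Real.norm_eq_abs, abs_of_nonneg hFnn]
  set E := Real.exp (-((v + r ^ 2) / (2 * σ ^ 2))) with hE'
  set I := besselI0 (r * Real.sqrt v / σ ^ 2) with hI'
  have hFeq : snr * (riceKernel σ r v * g u) = u / (2 * σ ^ 2) * (E * I * g u) := by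
    rw [riceKernel, ← hE', ← hI', ← hvs]; ring
  have hE1 : E ≤ 1 := by
    rw [hE', Real.exp_le_one_iff, neg_nonpos]
    positivity
  have hE0 : 0 ≤ E := (Real.exp_pos _).le
  have hIle : I ≤ Real.exp (δ / 2 * u) := by
    have hr2 : r ^ 2 ≤ 2 * δ * σ ^ 2 * σ ^ 2 * snr := by
      have h1 : r ^ 2 / (2 * δ * σ ^ 2 * σ ^ 2) ≤ snr := le_trans (le_max_right _ _) hsnr
      calc r ^ 2 = r ^ 2 / (2 * δ * σ ^ 2 * σ ^ 2) * (2 * δ * σ ^ 2 * σ ^ 2) := by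
            field_simp
        _ ≤ snr * (2 * δ * σ ^ 2 * σ ^ 2) := by
            apply mul_le_mul_of_nonneg_right h1 (by positivity)
        _ = 2 * δ * σ ^ 2 * σ ^ 2 * snr := by ring
    have he1 : (r * Real.sqrt v / σ ^ 2) ^ 2 / 4 = r ^ 2 * v / (4 * (σ ^ 2 * σ ^ 2)) := by
      rw [div_pow, mul_pow, Real.sq_sqrt hv0]; ring
    have hexple : (r * Real.sqrt v / σ ^ 2) ^ 2 / 4 ≤ δ / 2 * u := by
      rw [he1, div_le_iff₀ (by positivity : (0:ℝ) < 4 * (σ ^ 2 * σ ^ 2))]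
      have h3 : r ^ 2 * v ≤ 2 * δ * σ ^ 2 * σ ^ 2 * snr * v :=
        mul_le_mul_of_nonneg_right hr2 hv0
      calc r ^ 2 * v ≤ 2 * δ * σ ^ 2 * σ ^ 2 * snr * v := h3
        _ = 2 * δ * σ ^ 2 * σ ^ 2 * u := by rw [mul_assoc _ snr v, hvs]
        _ = δ / 2 * u * (4 * (σ ^ 2 * σ ^ 2)) := by ring
    exact le_trans (besselI0_le _) (Real.exp_le_exp.mpr hexple)
  have hI0 : 0 ≤ I := besselI0_nonneg _
  have hg : g u ≤ C * Real.exp (-(δ * u)) := hgb u hu.le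
  have step1 : E * I * g u ≤ Real.exp (δ / 2 * u) * (C * Real.exp (-(δ * u))) := by
    have t1 : E * I ≤ 1 * Real.exp (δ / 2 * u) :=
      mul_le_mul hE1 hIle hI0 one_pos.le
    rw [one_mul] at t1
    exact mul_le_mul t1 hg (hg0 u) (Real.exp_pos _).le
  have step2 : snr * (riceKernel σ r v * g u)
      ≤ u / (2 * σ ^ 2) * (Real.exp (δ / 2 * u) * (C * Real.exp (-(δ * u)))) := by
    rw [hFeq]
    exact mul_le_mul_of_nonneg_left step1 (by positivity)
  have hue : u ≤ 4 / δ * Real.exp (δ / 4 * u) := by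
    have h4 : δ / 4 * u ≤ Real.exp (δ / 4 * u) := by
      linarith [Real.add_one_le_exp (δ / 4 * u), Real.exp_pos (δ / 4 * u)]
    calc u = 4 / δ * (δ / 4 * u) := by field_simp
      _ ≤ 4 / δ * Real.exp (δ / 4 * u) :=
          mul_le_mul_of_nonneg_left h4 (by positivity)
  calc snr * (riceKernel σ r v * g u)
      ≤ u / (2 * σ ^ 2) * (Real.exp (δ / 2 * u) * (C * Real.exp (-(δ * u)))) := step2
    _ = C / (2 * σ ^ 2) * (u * Real.exp (-(δ / 2) * u)) := by
        rw [show Real.exp (δ / 2 * u) * (C * Real.exp (-(δ * u)))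
            = C * (Real.exp (δ / 2 * u) * Real.exp (-(δ * u))) by ring,
          ← Real.exp_add]
        ring_nf
    _ ≤ C / (2 * σ ^ 2) * (4 / δ * Real.exp (δ / 4 * u) * Real.exp (-(δ / 2) * u)) := by
        apply mul_le_mul_of_nonneg_left _ (by positivity)
        exact mul_le_mul_of_nonneg_right hue (Real.exp_pos _).le
    _ = C / (2 * σ ^ 2) * (4 / δ) * Real.exp (-(δ / 4) * u) := by
        rw [mul_assoc (4 / δ), ← Real.exp_add]
        ring_nf

lemma rice_term_tendsto (σ r : ℝ) (hσ : 0 < σ) (g : ℝ → ℝ) {u : ℝ} (hu : 0 < u) :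
    Tendsto (fun snr : ℝ => snr * (riceKernel σ r (u / snr) * g u)) atTop
      (𝓝 (u / (2 * σ ^ 2) * Real.exp (-(r ^ 2 / (2 * σ ^ 2))) * g u)) := by
  have h1 : Tendsto (fun snr : ℝ => u / snr) atTop (𝓝 0) :=
    Tendsto.div_atTop tendsto_const_nhds tendsto_id
  have hexp : Tendsto (fun snr : ℝ => Real.exp (-((u / snr + r ^ 2) / (2 * σ ^ 2)))) atTop
      (𝓝 (Real.exp (-(r ^ 2 / (2 * σ ^ 2))))) := by
    have : Tendsto (fun snr : ℝ => -((u / snr + r ^ 2) / (2 * σ ^ 2))) atTop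
        (𝓝 (-((0 + r ^ 2) / (2 * σ ^ 2)))) := (((h1.add_const (r ^ 2)).div_const _)).neg
    rw [zero_add] at this
    exact (Real.continuous_exp.tendsto _).comp this
  have hz : Tendsto (fun snr : ℝ => r * Real.sqrt (u / snr) / σ ^ 2) atTop (𝓝 0) := by
    have hs : Tendsto (fun snr : ℝ => Real.sqrt (u / snr)) atTop (𝓝 0) := by
      have := (Real.continuous_sqrt.tendsto 0).comp h1
      simpa [Function.comp_def] using this
    have := (hs.const_mul r).div_const (σ ^ 2)
    simpa using this
  have hIup : Tendsto (fun snr : ℝ =>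
      Real.exp ((r * Real.sqrt (u / snr) / σ ^ 2) ^ 2 / 4)) atTop (𝓝 1) := by
    have := (Real.continuous_exp.tendsto _).comp ((hz.pow 2).div_const 4)
    simpa [Function.comp_def] using this
  have hI : Tendsto (fun snr : ℝ => besselI0 (r * Real.sqrt (u / snr) / σ ^ 2)) atTop (𝓝 1) :=
    tendsto_of_tendsto_of_tendsto_of_le_of_le tendsto_const_nhds hIup
      (fun snr => one_le_besselI0 _) (fun snr => besselI0_le _)
  have hmain : Tendsto (fun snr : ℝ => u / (2 * σ ^ 2) *
      Real.exp (-((u / snr + r ^ 2) / (2 * σ ^ 2))) *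
      besselI0 (r * Real.sqrt (u / snr) / σ ^ 2) * g u) atTop
      (𝓝 (u / (2 * σ ^ 2) * Real.exp (-(r ^ 2 / (2 * σ ^ 2))) * g u)) := by
    have := (((tendsto_const_nhds (x := u / (2 * σ ^ 2))).mul hexp).mul hI).mul
      (tendsto_const_nhds (x := g u))
    simpa using this
  apply hmain.congr'
  filter_upwards [eventually_ge_atTop (1:ℝ)] with snr hsnr
  have hsnr0 : (0:ℝ) < snr := lt_of_lt_of_le one_pos hsnr
  have hvs : snr * (u / snr) = u := by rw [mul_comm, div_mul_cancel₀ u hsnr0.ne']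
  rw [riceKernel]
  rw [show snr * (u / snr / (2 * σ ^ 2) *
      Real.exp (-((u / snr + r ^ 2) / (2 * σ ^ 2))) *
      besselI0 (r * Real.sqrt (u / snr) / σ ^ 2) * g u)
    = snr * (u / snr) / (2 * σ ^ 2) *
      Real.exp (-((u / snr + r ^ 2) / (2 * σ ^ 2))) *
      besselI0 (r * Real.sqrt (u / snr) / σ ^ 2) * g u by ring, hvs]


/-- First-order high-snr coefficient of the average MMSE in a Rayleigh/Ricean fading
coherent channel driven by a discrete input: the average MMSE decays as `snr⁻²` with
coefficient `e^{-r²/(2σ²)}·M[mmse; 2]/(2σ²)`. -/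
theorem highSnr_avgMMSE_rice_firstOrder (σ r : ℝ) (hσ : 0 < σ) (hr : 0 ≤ r)
    {K : ℕ} (hK : 0 < K) (x : Fin K → ℂ) (p : Fin K → ℝ)
    (hx : Function.Injective x) (hp : ∀ j, 0 < p j) (hsum : ∑ j, p j = 1) :
    Tendsto
      (fun snr : ℝ =>
        snr ^ 2 * ∫ t in Set.Ioi (0 : ℝ), riceKernel σ r t * discreteMMSE x p (snr * t))
      atTop
      (𝓝 (Real.exp (-(r ^ 2 / (2 * σ ^ 2))) * mellinR (discreteMMSE x p) 2 / (2 * σ ^ 2))) := by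
  obtain ⟨C, δ, hC0, hδ0, hbound⟩ := mmse_exp_bound x p hx hp hK
  have hnn : ∀ u, 0 ≤ discreteMMSE x p u := mmse_nonneg x p hp
  have hmeas : Measurable (discreteMMSE x p) := mmse_measurable x p hp hK
  set g := discreteMMSE x p with hg
  have hDCT : Tendsto (fun snr : ℝ => ∫ u in Set.Ioi (0:ℝ),
      snr * (riceKernel σ r (u / snr) * g u)) atTop
      (𝓝 (∫ u in Set.Ioi (0:ℝ),
        u / (2 * σ ^ 2) * Real.exp (-(r ^ 2 / (2 * σ ^ 2))) * g u)) := by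
    apply tendsto_integral_filter_of_dominated_convergence
      (fun u => C / (2 * σ ^ 2) * (4 / δ) * Real.exp (-(δ / 4) * u))
    · filter_upwards [eventually_ge_atTop (1:ℝ)] with snr _
      apply Measurable.aestronglyMeasurable
      exact measurable_const.mul (((riceKernel_measurable σ r).comp
        (measurable_id.div_const snr)).mul hmeas)
    · filter_upwards [eventually_ge_atTop (max 1 (r ^ 2 / (2 * δ * σ ^ 2 * σ ^ 2)))]
        with snr hsnr
      rw [ae_restrict_iff' measurableSet_Ioi]
      exact Filter.Eventually.of_forall fun u hu =>
        rice_term_bound σ r δ C hσ hr hδ0 hC0 g hnn hbound hsnr hu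
    · exact (exp_neg_integrableOn_Ioi 0 (by positivity : (0:ℝ) < δ / 4)).const_mul _
    · rw [ae_restrict_iff' measurableSet_Ioi]
      exact Filter.Eventually.of_forall fun u hu => rice_term_tendsto σ r hσ g hu
  have hval : (∫ u in Set.Ioi (0:ℝ),
      u / (2 * σ ^ 2) * Real.exp (-(r ^ 2 / (2 * σ ^ 2))) * g u)
      = Real.exp (-(r ^ 2 / (2 * σ ^ 2))) * mellinR g 2 / (2 * σ ^ 2) := by
    have h2 : mellinR g 2 = ∫ t in Set.Ioi (0:ℝ), t * g t := by
      unfold mellinR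
      simp only [show (2:ℝ) - 1 = 1 by norm_num, Real.rpow_one]
    have h3 : (fun u : ℝ => u / (2 * σ ^ 2) * Real.exp (-(r ^ 2 / (2 * σ ^ 2))) * g u)
        = fun u : ℝ => (Real.exp (-(r ^ 2 / (2 * σ ^ 2))) / (2 * σ ^ 2)) * (u * g u) :=
      funext fun u => by ring
    rw [h2, h3, MeasureTheory.integral_const_mul]
    ring
  rw [hval] at hDCT
  refine Filter.Tendsto.congr' ?_ hDCT
  filter_upwards [eventually_ge_atTop (1:ℝ)] with snr hsnr
  have hsnr0 : (0:ℝ) < snr := lt_of_lt_of_le one_pos hsnr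
  have hsub := MeasureTheory.integral_comp_mul_left_Ioi
      (fun u => riceKernel σ r (u / snr) * g u) 0 hsnr0
  simp only [mul_zero, smul_eq_mul] at hsub
  have hinteq : (∫ t in Set.Ioi (0:ℝ), riceKernel σ r t * g (snr * t))
      = ∫ t in Set.Ioi (0:ℝ), riceKernel σ r (snr * t / snr) * g (snr * t) := by
    rw [show (fun t : ℝ => riceKernel σ r t * g (snr * t))
        = fun t : ℝ => riceKernel σ r (snr * t / snr) * g (snr * t) from
      funext fun t => by rw [mul_div_cancel_left₀ _ hsnr0.ne']]
  calc (∫ u in Set.Ioi (0:ℝ), snr * (riceKernel σ r (u / snr) * g u))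
      = snr * ∫ u in Set.Ioi (0:ℝ), riceKernel σ r (u / snr) * g u :=
        MeasureTheory.integral_const_mul _ _
    _ = snr ^ 2 * (snr⁻¹ * ∫ u in Set.Ioi (0:ℝ), riceKernel σ r (u / snr) * g u) := by
        field_simp
    _ = snr ^ 2 * ∫ t in Set.Ioi (0:ℝ), riceKernel σ r (snr * t / snr) * g (snr * t) := by
        rw [← hsub]
    _ = snr ^ 2 * ∫ t in Set.Ioi (0:ℝ), riceKernel σ r t * g (snr * t) := by
        rw [← hinteq]
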